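/- Let k be a positive integer and let m_1, m_2, …, m_k be positive integers. Let T_{m_i} denote the m_i-th Chebyshev polynomial of the first kind (with T_0 = 1, T_1 = x, T_{n+1} = 2x·T_n − T_{n−1}). Then the product T(x) = T_{m_1}(x)·T_{m_2}(x)···T_{m_k}(x) belongs to 𝒫, i.e., there are infinitely many positive integers n such that T_{m_1}(n)·T_{m_2}(n)···T_{m_k}(n) divides n!. -/

import Mathlib

open Polynomial Finset

namespace Stmt18Aux

noncomputable section

def t (N : ℕ) : ℤ := (Polynomial.Chebyshev.T ℤ (N : ℤ)).eval 2

lemma t_zero : t 0 = 1 := by simp [t]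
lemma t_one : t 1 = 2 := by simp [t]

lemma t_rec (N : ℕ) : t (N + 2) = 4 * t (N + 1) - t N := by
  have h2 : ((N + 2 : ℕ) : ℤ) = (N : ℤ) + 2 := by push_cast; ring
  have h1 : ((N + 1 : ℕ) : ℤ) = (N : ℤ) + 1 := by push_cast; ring
  unfold t
  rw [h2, h1, Polynomial.Chebyshev.T_add_two]
  simp

lemma t_basic : ∀ N, 1 ≤ t N ∧ t N ≤ t (N + 1) ∧ 3 * t (N + 1) ≤ t (N + 2) := by
  intro N
  induction N with
  | zero =>
    have h := t_rec 0
    norm_num [t_zero, t_one] at h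
    refine ⟨le_of_eq t_zero.symm, ?_, ?_⟩
    · show t 0 ≤ t 1
      rw [t_zero, t_one]; norm_num
    · show 3 * t 1 ≤ t 2
      rw [t_one, h]; norm_num
  | succ N ih =>
    obtain ⟨h1, h2, h3⟩ := ih
    have h4 := t_rec (N + 1)
    refine ⟨by linarith, by linarith, by linarith⟩

lemma t_pos (N : ℕ) : 1 ≤ t N := (t_basic N).1

lemma t_double (N : ℕ) : 2 * t N ≤ t (N + 1) := by
  cases N with
  | zero => rw [t_zero, t_one]; norm_num
  | succ K =>
    have h := (t_basic K).2.2
    have := t_pos (K + 1)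
    linarith

lemma t_ge_pow (N : ℕ) : (2 : ℤ) ^ N ≤ t N := by
  induction N with
  | zero => simp [t_zero]
  | succ N ih =>
    have h := t_double N
    calc (2:ℤ)^(N+1) = 2 * 2^N := by ring
    _ ≤ 2 * t N := by linarith
    _ ≤ t (N+1) := h

lemma t_eleven : ∀ r : ℕ, 7 * 11 ^ r ≤ 3 ^ r * t (r + 2) := by
  intro r
  induction r with
  | zero =>
    have h := t_rec 0
    norm_num [t_zero, t_one] at h
    show (7:ℤ) * 11 ^ 0 ≤ 3 ^ 0 * t 2
    rw [h]; norm_num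
  | succ r ih =>
    have h3 : 3 * t (r + 2) ≤ t (r + 3) := (t_basic (r + 1)).2.2
    have h4 : t (r + 3) = 4 * t (r + 2) - t (r + 1) := t_rec (r + 1)
    have h5 : 3 * t (r + 1) ≤ t (r + 2) := (t_basic r).2.2
    have hp : (0:ℤ) ≤ 3 ^ r := by positivity
    have hY : 3 * (3 ^ r * t (r+1)) ≤ 3 ^ r * t (r+2) := by
      have h6 := mul_le_mul_of_nonneg_left h5 hp
      calc 3 * (3 ^ r * t (r+1)) = 3 ^ r * (3 * t (r+1)) := by ring
        _ ≤ 3 ^ r * t (r+2) := h6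
    calc (7:ℤ) * 11 ^ (r+1) = 11 * (7 * 11 ^ r) := by ring
      _ ≤ 11 * (3 ^ r * t (r+2)) := by linarith
      _ = 12 * (3 ^ r * t (r+2)) - (3 ^ r * t (r+2)) := by ring
      _ ≤ 12 * (3 ^ r * t (r+2)) - 3 * (3 ^ r * t (r+1)) := by linarith
      _ = 3 ^ (r+1) * t ((r+1) + 2) := by
          have : r + 1 + 2 = r + 3 := by ring
          rw [this, h4]; ring

-- the alpha facts
def α : Zsqrtd 3 := ⟨2, 1⟩

lemma alpha_mul_star : α * star α = 1 := by
  have : star α = ⟨2, -1⟩ := Zsqrtd.star_mk 2 1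
  rw [this]
  ext <;> simp [α, Zsqrtd.re_mul, Zsqrtd.im_mul]

lemma alpha_sq : α ^ 2 = 4 * α - 1 := by
  ext <;> simp [α, pow_two, Zsqrtd.re_mul, Zsqrtd.im_mul]

lemma star_alpha_sq : (star α) ^ 2 = 4 * star α - 1 := by
  have h := congrArg star alpha_sq
  simpa using h

lemma omega : ∀ N : ℕ, α ^ N + star α ^ N = ((2 * t N : ℤ) : Zsqrtd 3) := by
  intro N
  induction N using Nat.twoStepInduction with
  | zero => rw [t_zero]; push_cast; norm_num
  | one =>
    rw [t_one]
    have : star α = ⟨2, -1⟩ := Zsqrtd.star_mk 2 1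
    rw [this]
    ext <;> simp [α]
  | more n ih1 ih2 =>
    have h1 : α ^ (n + 2) = 4 * α ^ (n + 1) - α ^ n := by
      have : α ^ (n + 2) = α ^ n * α ^ 2 := by rw [← pow_add]
      rw [this, alpha_sq]
      have : α ^ (n+1) = α ^ n * α := pow_succ α n
      rw [this]; ring
    have h2 : star α ^ (n + 2) = 4 * star α ^ (n + 1) - star α ^ n := by
      have : star α ^ (n + 2) = star α ^ n * star α ^ 2 := by rw [← pow_add]
      rw [this, star_alpha_sq]
      have : star α ^ (n+1) = star α ^ n * star α := pow_succ _ n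
      rw [this]; ring
    rw [h1, h2, t_rec]
    push_cast
    push_cast at ih1 ih2
    linear_combination 4 * ih2 - ih1

lemma alpha_pow_pos : ∀ N : ℕ, 1 ≤ (α ^ (N + 1)).re ∧ 1 ≤ (α ^ (N + 1)).im := by
  intro N
  induction N with
  | zero => constructor <;> simp [α]
  | succ N ih =>
    have h : α ^ (N + 2) = α ^ (N + 1) * α := pow_succ α (N + 1)
    obtain ⟨h1, h2⟩ := ih
    have e1 : α.re = 2 := rfl
    have e2 : α.im = 1 := rfl
    constructor
    · rw [h, Zsqrtd.re_mul, e1, e2]; linarith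
    · rw [h, Zsqrtd.im_mul, e1, e2]; linarith

lemma alpha_pow_ne_one {K : ℕ} (hK : 0 < K) : α ^ K ≠ 1 := by
  cases K with
  | zero => exact absurd hK (by norm_num)
  | succ J =>
    intro h
    have h2 := (alpha_pow_pos J).2
    rw [h] at h2
    simp at h2


lemma three_nonsquare : ∀ n : ℤ, (3:ℤ) ≠ n * n := by
  intro n h
  rcases le_or_gt n (-2) with h1 | h1
  · nlinarith
  · rcases le_or_gt 2 n with h2 | h2
    · nlinarith
    · interval_cases n <;> norm_num at h

lemma zsqrtd_cancel {a b c : Zsqrtd 3} (hc : c ≠ 0) (h : a * c = b * c) : a = b := by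
  have h0 : (a - b) * c = 0 := by rw [sub_mul, h, sub_self]
  have hn : Zsqrtd.norm (a - b) * Zsqrtd.norm c = 0 := by
    rw [← Zsqrtd.norm_mul, h0, Zsqrtd.norm_zero]
  have hcn : Zsqrtd.norm c ≠ 0 := fun hh => hc ((Zsqrtd.norm_eq_zero three_nonsquare c).1 hh)
  have hz : Zsqrtd.norm (a - b) = 0 := by
    rcases mul_eq_zero.1 hn with h' | h'
    · exact h'
    · exact absurd h' hcn
  have := (Zsqrtd.norm_eq_zero three_nonsquare _).1 hz
  exact sub_eq_zero.1 this

-- cyclotomic machinery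
def zc (d : ℕ) : Zsqrtd 3 := (cyclotomic d ℤ).eval₂ (Int.castRingHom (Zsqrtd 3)) α

def ψ (d : ℕ) : ℤ := Zsqrtd.norm (zc d)

def ψn (d : ℕ) : ℕ := (ψ d).natAbs

lemma zc_eq (d : ℕ) : zc d = (cyclotomic d (Zsqrtd 3)).eval α := by
  rw [zc, ← map_cyclotomic_int d (Zsqrtd 3), Polynomial.eval_map]

lemma prod_zc {M : ℕ} (hM : 0 < M) : ∏ d ∈ M.divisors, zc d = α ^ M - 1 := by
  have h := Polynomial.prod_cyclotomic_eq_X_pow_sub_one hM (Zsqrtd 3)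
  have h2 := congrArg (Polynomial.eval α) h
  rw [Polynomial.eval_prod] at h2
  simp only [Polynomial.eval_sub, Polynomial.eval_pow, Polynomial.eval_X,
    Polynomial.eval_one] at h2
  rw [← h2]
  exact Finset.prod_congr rfl fun d _ => zc_eq d

def S (N : ℕ) : Finset ℕ := (4*N).divisors \ (2*N).divisors

lemma prod_zc_S {N : ℕ} (hN : 0 < N) : ∏ d ∈ S N, zc d = α ^ (2*N) + 1 := by
  have h2 : 0 < 2*N := by positivity
  have h4 : 0 < 4*N := by positivity
  have hsub : (2*N).divisors ⊆ (4*N).divisors :=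
    Nat.divisors_subset_of_dvd h4.ne' ⟨2, by ring⟩
  have hprod := Finset.prod_sdiff (f := zc) hsub
  rw [prod_zc h2, prod_zc h4] at hprod
  have hne : α ^ (2*N) - 1 ≠ 0 := sub_ne_zero.2 (alpha_pow_ne_one h2)
  apply zsqrtd_cancel hne
  simp only [S]
  rw [hprod]
  have h44 : 4*N = 2*(2*N) := by ring
  rw [h44, pow_mul]
  ring

lemma psi_prod {N : ℕ} (hN : 0 < N) : ∏ d ∈ S N, ψ d = 4 * t N ^ 2 := by
  have hhom : ∏ d ∈ S N, ψ d = Zsqrtd.norm (∏ d ∈ S N, zc d) :=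
    (map_prod Zsqrtd.normMonoidHom zc (S N)).symm
  rw [hhom, prod_zc_S hN]
  have key : ((Zsqrtd.norm (α ^ (2*N) + 1) : ℤ) : Zsqrtd 3) = ((4 * t N ^ 2 : ℤ) : Zsqrtd 3) := by
    rw [Zsqrtd.norm_eq_mul_conj]
    rw [star_add, star_one, star_pow]
    have e1 : α ^ (2*N) = (α ^ N)^2 := by rw [mul_comm, pow_mul]
    have e2 : (star α) ^ (2*N) = ((star α) ^ N)^2 := by rw [mul_comm, pow_mul]
    have hαs : α ^ N * (star α) ^ N = 1 := by rw [← mul_pow, alpha_mul_star, one_pow]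
    have hω := omega N
    have expand : (α ^ (2*N) + 1) * ((star α) ^ (2*N) + 1)
        = (α ^ N + (star α) ^ N)^2 + (α ^ N * (star α) ^ N)^2
          - 2*(α ^ N * (star α) ^ N) + 1 := by
      rw [e1, e2]; ring
    rw [expand, hω, hαs]
    push_cast
    ring
  exact_mod_cast key

lemma psi_ne_zero {N d : ℕ} (hN : 0 < N) (hd : d ∈ S N) : ψ d ≠ 0 := by
  intro h
  have h0 := psi_prod hN
  rw [Finset.prod_eq_zero hd h] at h0
  have := t_pos N
  nlinarith [h0]

-- complex bounds
lemma cyclo_eval_norm_le {d : ℕ} (hd : 0 < d) (x : ℂ) :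
    ‖(cyclotomic d ℂ).eval x‖ ≤ (‖x‖ + 1) ^ d.totient := by
  have h := Complex.isPrimitiveRoot_exp d hd.ne'
  rw [cyclotomic_eq_prod_X_sub_primitiveRoots h, eval_prod, norm_prod]
  have hle : ∀ μ ∈ primitiveRoots d ℂ, ‖(X - C μ).eval x‖ ≤ ‖x‖ + 1 := by
    intro μ hμ
    have hμ2 : IsPrimitiveRoot μ d := (mem_primitiveRoots hd).1 hμ
    have h1 : ‖μ‖ = 1 := Complex.norm_eq_one_of_pow_eq_one hμ2.pow_eq_one hd.ne'
    simp only [eval_sub, eval_X, eval_C]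
    calc ‖x - μ‖ ≤ ‖x‖ + ‖μ‖ := norm_sub_le _ _
      _ = ‖x‖ + 1 := by rw [h1]
  calc ∏ μ ∈ primitiveRoots d ℂ, ‖(X - C μ).eval x‖
      ≤ ∏ _μ ∈ primitiveRoots d ℂ, (‖x‖ + 1) :=
        Finset.prod_le_prod (fun μ _ => norm_nonneg _) hle
    _ = (‖x‖ + 1) ^ d.totient := by rw [Finset.prod_const, Complex.card_primitiveRoots]

def gC : Zsqrtd 3 →+* ℂ := Zsqrtd.lift ⟨((Real.sqrt 3 : ℝ) : ℂ), by
  rw [← Complex.ofReal_mul, Real.mul_self_sqrt (by norm_num : (0:ℝ) ≤ 3)]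
  norm_num⟩

lemma gC_alpha : gC α = ((2 + Real.sqrt 3 : ℝ) : ℂ) := by
  rw [gC, Zsqrtd.lift_apply_apply]
  show ((2:ℤ) : ℂ) + ((1:ℤ) : ℂ) * _ = _
  push_cast
  try ring

lemma gC_star_alpha : gC (star α) = ((2 - Real.sqrt 3 : ℝ) : ℂ) := by
  have hs : star α = (⟨2, -1⟩ : Zsqrtd 3) := Zsqrtd.star_mk 2 1
  rw [hs, gC, Zsqrtd.lift_apply_apply]
  show ((2:ℤ) : ℂ) + ((-1:ℤ) : ℂ) * _ = _
  push_cast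
  try ring

lemma eval₂_int_complex (d : ℕ) (x : ℂ) :
    (cyclotomic d ℤ).eval₂ (Int.castRingHom ℂ) x = (cyclotomic d ℂ).eval x := by
  rw [← map_cyclotomic_int d ℂ, Polynomial.eval_map]

lemma star_zc (d : ℕ) :
    star (zc d) = (cyclotomic d ℤ).eval₂ (Int.castRingHom (Zsqrtd 3)) (star α) := by
  have h : star (zc d) = (starRingEnd (Zsqrtd 3)) (zc d) := rfl
  rw [h, zc, Polynomial.hom_eval₂]
  congr 1

lemma psi_complex (d : ℕ) :
    ((ψ d : ℤ) : ℂ) = (cyclotomic d ℂ).eval (gC α) * (cyclotomic d ℂ).eval (gC (star α)) := by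
  have h1 : ((ψ d : ℤ) : Zsqrtd 3) = zc d * star (zc d) := Zsqrtd.norm_eq_mul_conj (zc d)
  have h2 := congrArg gC h1
  rw [map_intCast, map_mul] at h2
  rw [h2]
  congr 1
  · rw [zc, Polynomial.hom_eval₂, Subsingleton.elim (gC.comp (Int.castRingHom (Zsqrtd 3)))
      (Int.castRingHom ℂ), eval₂_int_complex]
  · rw [star_zc, Polynomial.hom_eval₂, Subsingleton.elim (gC.comp (Int.castRingHom (Zsqrtd 3)))
      (Int.castRingHom ℂ), eval₂_int_complex]

lemma sqrt3_le_two : Real.sqrt 3 ≤ 2 := by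
  have h : (3:ℝ) ≤ 2^2 := by norm_num
  calc Real.sqrt 3 ≤ Real.sqrt (2^2) := Real.sqrt_le_sqrt h
    _ = 2 := Real.sqrt_sq (by norm_num)

lemma psin_le {d : ℕ} (hd : 0 < d) : ψn d ≤ 6 ^ d.totient := by
  have hs0 : 0 ≤ Real.sqrt 3 := Real.sqrt_nonneg 3
  have hs2 := sqrt3_le_two
  have h1 : ((ψn d : ℕ) : ℝ) = ‖((ψ d : ℤ) : ℂ)‖ := by
    rw [ψn, Complex.norm_intCast, Nat.cast_natAbs, Int.cast_abs]
  have h2 : ‖((ψ d : ℤ) : ℂ)‖ ≤ 6 ^ d.totient := by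
    rw [psi_complex, norm_mul]
    have hb1 := cyclo_eval_norm_le hd (gC α)
    have hb2 := cyclo_eval_norm_le hd (gC (star α))
    have hn1 : ‖gC α‖ = 2 + Real.sqrt 3 := by
      rw [gC_alpha, Complex.norm_real, Real.norm_eq_abs, abs_of_nonneg (by linarith)]
    have hn2 : ‖gC (star α)‖ = 2 - Real.sqrt 3 := by
      rw [gC_star_alpha, Complex.norm_real, Real.norm_eq_abs, abs_of_nonneg (by linarith)]
    have hmul : ‖(cyclotomic d ℂ).eval (gC α)‖ * ‖(cyclotomic d ℂ).eval (gC (star α))‖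
        ≤ (‖gC α‖ + 1) ^ d.totient * (‖gC (star α)‖ + 1) ^ d.totient :=
      mul_le_mul hb1 hb2 (norm_nonneg _) (by positivity)
    have heq : (‖gC α‖ + 1) ^ d.totient * (‖gC (star α)‖ + 1) ^ d.totient
        = (6:ℝ) ^ d.totient := by
      rw [hn1, hn2, ← mul_pow]
      have h9 : Real.sqrt 3 * Real.sqrt 3 = 3 := Real.mul_self_sqrt (by norm_num)
      have h6 : (2 + Real.sqrt 3 + 1) * (2 - Real.sqrt 3 + 1) = 6 := by nlinarith [h9]
      rw [h6]
    linarith [hmul, heq.le, heq.ge]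
  have h3 : ((ψn d : ℕ) : ℝ) ≤ ((6 ^ d.totient : ℕ) : ℝ) := by
    rw [h1]; push_cast; linarith [h2]
  exact_mod_cast h3

-- combinatorial and numeric lemmas
lemma card_divisors_le (W : ℕ) : W.divisors.card ≤ W := by
  rcases Nat.eq_zero_or_pos W with h | h
  · subst h; simp
  have hsub : W.divisors ⊆ Finset.Ico 1 (W+1) := by
    intro d hd
    have h1 := Nat.mem_divisors.1 hd
    have hdW : d ≤ W := Nat.le_of_dvd h h1.1
    have hd0 : 0 < d := Nat.pos_of_mem_divisors hd
    rw [Finset.mem_Ico]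
    omega
  calc W.divisors.card ≤ (Finset.Ico 1 (W+1)).card := Finset.card_le_card hsub
    _ = W := by rw [Nat.card_Ico]; omega

lemma pow_fact_dvd (c B : ℕ) : (B.factorial)^c ∣ (c*B).factorial := by
  induction c with
  | zero => simp
  | succ c ih =>
    have h1 : (B.factorial)^(c+1) = (B.factorial)^c * B.factorial := pow_succ _ _
    have h2 : (c*B).factorial * B.factorial ∣ (c*B + B).factorial :=
      Nat.factorial_mul_factorial_dvd_factorial_add _ _
    have h3 : (c+1)*B = c*B + B := by ring
    rw [h1, h3]
    exact dvd_trans (mul_dvd_mul ih dvd_rfl) h2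

lemma prod_dvd_pow_fact {ι : Type*} (s : Finset ι) (f : ι → ℕ) (B : ℕ)
    (h : ∀ x ∈ s, f x ∣ B.factorial) : ∏ x ∈ s, f x ∣ (B.factorial)^s.card := by
  calc ∏ x ∈ s, f x ∣ ∏ _x ∈ s, B.factorial := Finset.prod_dvd_prod_of_dvd _ _ h
    _ = (B.factorial)^s.card := Finset.prod_const _

lemma sq_le_two_pow : ∀ u : ℕ, 4 ≤ u → u^2 ≤ 2^u := by
  intro u hu
  induction u, hu using Nat.le_induction with
  | base => norm_num
  | succ u hu ih =>
    have h1 : (u+1)^2 ≤ 2*u^2 := by nlinarith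
    calc (u+1)^2 ≤ 2*u^2 := h1
      _ ≤ 2*2^u := by omega
      _ = 2^(u+1) := by rw [pow_succ]; ring

lemma E_exists (A : ℕ) : ∃ r₀ : ℕ, 16 ≤ r₀ ∧ ∀ r, r₀ ≤ r → 36*A*(r+2)*9^r ≤ 7*11^r := by
  refine ⟨4*(36*A+4), by omega, ?_⟩
  set u := 36*A + 4 with hu
  have base : 36*A*(4*u+2)*9^(4*u) ≤ 7*11^(4*u) := by
    have h1 : (11:ℕ)^(4*u) = (11^4)^u := by rw [← pow_mul]
    have h2 : (9:ℕ)^(4*u) = (9^4)^u := by rw [← pow_mul]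
    have h4 : (2*9^4 : ℕ)^u ≤ (11^4)^u := Nat.pow_le_pow_left (by norm_num) u
    have h5 : 36*A*(4*u+2) ≤ 7*2^u := by
      have h6 : u^2 ≤ 2^u := sq_le_two_pow u (by omega)
      have h7 : 36*A*(4*u+2) ≤ 216*A*u := by nlinarith
      have h8 : 216*A*u ≤ 7*u^2 := by nlinarith
      have h9 : 7*u^2 ≤ 7*2^u := by omega
      omega
    calc 36*A*(4*u+2)*9^(4*u) ≤ 7*2^u*9^(4*u) := Nat.mul_le_mul_right _ h5
      _ = 7*(2^u*(9^4)^u) := by rw [h2]; ring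
      _ = 7*(2*9^4)^u := by rw [← mul_pow]
      _ ≤ 7*(11^4)^u := Nat.mul_le_mul_left _ h4
      _ = 7*11^(4*u) := by rw [h1]
  intro r hr
  induction r, hr using Nat.le_induction with
  | base => exact base
  | succ r hr ih =>
    have hr16 : 16 ≤ r := by omega
    have h9 : 9*(r+3) ≤ 11*(r+2) := by omega
    have e1 : 36*A*(r+1+2)*9^(r+1) = (9*(r+3))*(36*A*9^r) := by rw [pow_succ]; ring
    have e2 : 7*11^(r+1) = 11*(7*11^r) := by rw [pow_succ]; ring
    rw [e1, e2]
    calc (9*(r+3))*(36*A*9^r) ≤ (11*(r+2))*(36*A*9^r) := Nat.mul_le_mul_right _ h9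
      _ = 11*(36*A*(r+2)*9^r) := by ring
      _ ≤ 11*(7*11^r) := Nat.mul_le_mul_left _ ih

lemma prime_prod_lt (ε : ℝ) (hε : 0 < ε) :
    ∃ F : Finset ℕ, (∀ p ∈ F, p.Prime) ∧ ∏ p ∈ F, (1 - 1/(p:ℝ)) < ε := by
  have hns := not_summable_one_div_on_primes
  set f : ℕ → ℝ := Set.indicator {p : ℕ | p.Prime} (fun n : ℕ => 1/(n:ℝ)) with hfdef
  have hf0 : 0 ≤ f := fun n => Set.indicator_apply_nonneg (fun _ => by positivity)
  have hall : ¬ ∀ u : Finset ℕ, ∑ x ∈ u, f x ≤ -Real.log ε :=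
    fun h => hns (summable_of_sum_le hf0 h)
  push_neg at hall
  obtain ⟨u, hu⟩ := hall
  refine ⟨u.filter Nat.Prime, fun p hp => (Finset.mem_filter.1 hp).2, ?_⟩
  have hsum : ∑ x ∈ u, f x = ∑ p ∈ u.filter Nat.Prime, 1/(p:ℝ) := by
    rw [Finset.sum_filter]
    refine Finset.sum_congr rfl fun x _ => ?_
    simp [hfdef, Set.indicator_apply]
  rw [hsum] at hu
  set F := u.filter Nat.Prime with hF
  have hprime : ∀ p ∈ F, Nat.Prime p := fun p hp => (Finset.mem_filter.1 hp).2
  have h1 : ∏ p ∈ F, (1 - 1/(p:ℝ)) ≤ ∏ p ∈ F, Real.exp (-(1/(p:ℝ))) := by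
    apply Finset.prod_le_prod
    · intro p hp
      have h2 := (hprime p hp).two_le
      have hp1 : (1:ℝ) ≤ (p:ℝ) := by exact_mod_cast Nat.one_le_of_lt h2
      have h0 : 1/(p:ℝ) ≤ 1 := by
        rw [div_le_one (by linarith)]
        linarith
      linarith
    · intro p hp
      have := Real.add_one_le_exp (-(1/(p:ℝ)))
      linarith
  have h2 : ∏ p ∈ F, Real.exp (-(1/(p:ℝ))) = Real.exp (∑ p ∈ F, -(1/(p:ℝ))) :=
    (Real.exp_sum F _).symm
  have h3 : (∑ p ∈ F, -(1/(p:ℝ))) = -(∑ p ∈ F, 1/(p:ℝ)) := by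
    rw [Finset.sum_neg_distrib]
  have h4 : Real.exp (-(∑ p ∈ F, 1/(p:ℝ))) < Real.exp (Real.log ε) := by
    apply Real.exp_lt_exp.2
    linarith
  calc ∏ p ∈ F, (1 - 1/(p:ℝ)) ≤ ∏ p ∈ F, Real.exp (-(1/(p:ℝ))) := h1
    _ = Real.exp (∑ p ∈ F, -(1/(p:ℝ))) := h2
    _ = Real.exp (-(∑ p ∈ F, 1/(p:ℝ))) := by rw [h3]
    _ < Real.exp (Real.log ε) := h4
    _ = ε := Real.exp_log hε

lemma smooth_exists (M : ℕ) (hM : 0 < M) :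
    ∃ q : ℕ, 2 ≤ q ∧ ∀ e : ℕ, 1 ≤ e → ∀ d : ℕ, d ∣ 4*M*q^e → 2 * d.totient ≤ q^e := by
  obtain ⟨F₀, hF₀p, hF₀lt⟩ := prime_prod_lt (1/(8*M)) (by positivity)
  set F := F₀ ∪ (4*M).primeFactors with hF
  have hFp : ∀ p ∈ F, p.Prime := by
    intro p hp
    rcases Finset.mem_union.1 hp with h | h
    · exact hF₀p p h
    · exact Nat.prime_of_mem_primeFactors h
  have h4M : 0 < 4*M := Nat.mul_pos (by norm_num) hM
  have hq0 : (∏ p ∈ F, p) ≠ 0 :=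
    Finset.prod_ne_zero_iff.2 fun p hp => (hFp p hp).pos.ne'
  have h2F : 2 ∈ F := by
    apply Finset.mem_union_right
    rw [Nat.mem_primeFactors]
    exact ⟨Nat.prime_two, ⟨2*M, by ring⟩, h4M.ne'⟩
  have hq2 : 2 ≤ ∏ p ∈ F, p :=
    Nat.le_of_dvd (Nat.pos_of_ne_zero hq0) (Finset.dvd_prod_of_mem _ h2F)
  have hnn1 : ∀ p ∈ F, (0:ℝ) ≤ 1 - 1/(p:ℝ) := by
    intro p hp
    have h2 := (hFp p hp).two_le
    have hp1 : (1:ℝ) ≤ (p:ℝ) := by exact_mod_cast Nat.one_le_of_lt h2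
    have h0 : 1/(p:ℝ) ≤ 1 := by
      rw [div_le_one (by linarith)]
      linarith
    linarith
  have hkey : 8*M*(∏ p ∈ F, (p-1)) ≤ ∏ p ∈ F, p := by
    have hr : (8*M : ℝ) * (∏ p ∈ F, ((p:ℝ)-1)) ≤ ∏ p ∈ F, (p:ℝ) := by
      have hprodpos : (0:ℝ) < ∏ p ∈ F, (p:ℝ) :=
        Finset.prod_pos fun p hp => by exact_mod_cast (hFp p hp).pos
      have hsplit : ∏ p ∈ F, ((p:ℝ)-1) = (∏ p ∈ F, (p:ℝ)) * ∏ p ∈ F, (1 - 1/(p:ℝ)) := by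
        rw [← Finset.prod_mul_distrib]
        refine Finset.prod_congr rfl fun p hp => ?_
        have hppos : (0:ℝ) < p := by exact_mod_cast (hFp p hp).pos
        field_simp
      have hsubset : ∏ p ∈ F, (1 - 1/(p:ℝ)) ≤ ∏ p ∈ F₀, (1 - 1/(p:ℝ)) := by
        have hsub : F₀ ⊆ F := Finset.subset_union_left
        have hsd := Finset.prod_sdiff (f := fun p : ℕ => (1 - 1/(p:ℝ))) hsub
        rw [← hsd]
        have hone : ∏ p ∈ F \ F₀, (1 - 1/(p:ℝ)) ≤ 1 :=
          Finset.prod_le_one (fun p hp => hnn1 p (Finset.mem_sdiff.1 hp).1)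
            (fun p hp => by
              have hip : (0:ℝ) ≤ 1/(p:ℝ) := by positivity
              linarith)
        have hpos₀ : (0:ℝ) ≤ ∏ p ∈ F₀, (1 - 1/(p:ℝ)) :=
          Finset.prod_nonneg fun p hp => hnn1 p (hsub hp)
        exact mul_le_of_le_one_left hpos₀ hone
      have hM8 : (0:ℝ) < 8*M := by positivity
      have hltone : (8*M:ℝ) * ∏ p ∈ F, (1 - 1/(p:ℝ)) ≤ 1 := by
        have hchain : (8*M:ℝ) * ∏ p ∈ F, (1-1/(p:ℝ)) ≤ (8*M:ℝ) * ∏ p ∈ F₀, (1-1/(p:ℝ)) :=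
          mul_le_mul_of_nonneg_left hsubset hM8.le
        have hend : (8*M:ℝ) * ∏ p ∈ F₀, (1-1/(p:ℝ)) ≤ (8*M:ℝ) * (1/(8*M)) :=
          mul_le_mul_of_nonneg_left hF₀lt.le hM8.le
        have hone' : (8*M:ℝ) * (1/(8*M:ℝ)) = 1 := by field_simp
        linarith
      calc (8*M : ℝ) * (∏ p ∈ F, ((p:ℝ)-1))
          = (∏ p ∈ F, (p:ℝ)) * ((8*M:ℝ) * ∏ p ∈ F, (1 - 1/(p:ℝ))) := by rw [hsplit]; ring
        _ ≤ (∏ p ∈ F, (p:ℝ)) * 1 := mul_le_mul_of_nonneg_left hltone hprodpos.le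
        _ = ∏ p ∈ F, (p:ℝ) := by ring
    have hc1 : ((8*M*(∏ p ∈ F, (p-1)) : ℕ) : ℝ) = (8*M : ℝ) * (∏ p ∈ F, ((p:ℝ)-1)) := by
      push_cast
      congr 1
      refine Finset.prod_congr rfl fun p hp => ?_
      have h1 : 1 ≤ p := (hFp p hp).one_lt.le
      rw [Nat.cast_sub h1]
      norm_num
    have hc2 : ((∏ p ∈ F, p : ℕ) : ℝ) = ∏ p ∈ F, (p:ℝ) := by push_cast; rfl
    have hfin : ((8*M*(∏ p ∈ F, (p-1)) : ℕ) : ℝ) ≤ ((∏ p ∈ F, p : ℕ) : ℝ) := by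
      rw [hc1, hc2]; exact hr
    exact_mod_cast hfin
  refine ⟨∏ p ∈ F, p, hq2, ?_⟩
  intro e he d hd
  have hqe0 : (∏ p ∈ F, p)^e ≠ 0 := pow_ne_zero e hq0
  have hW0 : 0 < 4*M*(∏ p ∈ F, p)^e :=
    Nat.mul_pos h4M (Nat.pos_of_ne_zero hqe0)
  have hφd : d.totient ≤ (4*M*(∏ p ∈ F, p)^e).totient :=
    Nat.le_of_dvd (Nat.totient_pos.2 hW0) (Nat.totient_dvd_of_dvd hd)
  have hPF : (4*M*(∏ p ∈ F, p)^e).primeFactors = F := by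
    rw [Nat.primeFactors_mul h4M.ne' hqe0]
    rw [Nat.primeFactors_pow _ (by omega : e ≠ 0)]
    rw [Nat.primeFactors_prod hFp]
    exact Finset.union_eq_right.2 Finset.subset_union_right
  have htot := Nat.totient_mul_prod_primeFactors (4*M*(∏ p ∈ F, p)^e)
  rw [hPF] at htot
  have hineq : 2*(4*M*(∏ p ∈ F, p)^e).totient * (∏ p ∈ F, p)
      ≤ (∏ p ∈ F, p)^e * (∏ p ∈ F, p) := by
    calc 2*(4*M*(∏ p ∈ F, p)^e).totient * (∏ p ∈ F, p)
        = 2*((4*M*(∏ p ∈ F, p)^e) * ∏ p ∈ F, (p-1)) := by rw [mul_assoc, htot]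
      _ = (∏ p ∈ F, p)^e * (8*M*(∏ p ∈ F, (p-1))) := by ring
      _ ≤ (∏ p ∈ F, p)^e * (∏ p ∈ F, p) := Nat.mul_le_mul_left _ hkey
  have hfin2 := Nat.le_of_mul_le_mul_right hineq (by omega : 0 < ∏ p ∈ F, p)
  calc 2*d.totient ≤ 2*(4*M*(∏ p ∈ F, p)^e).totient := by omega
    _ ≤ (∏ p ∈ F, p)^e := hfin2

end
end Stmt18Aux

open Stmt18Aux

theorem stmt_18 (k : ℕ) (hk : 0 < k) (m : Fin k → ℕ) (hm : ∀ i, 0 < m i) :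
    ∀ N : ℕ, ∃ n : ℕ, N < n ∧
      (∏ i, (Polynomial.Chebyshev.T ℤ (m i : ℤ)).eval (n : ℤ)) ∣ (n.factorial : ℤ) := by
  intro N
  classical
  set M := ∏ i, m i with hM
  have hM0 : 0 < M := Finset.prod_pos fun i _ => hm i
  set A := ∑ i, m i with hA
  obtain ⟨q, hq2, hsmooth⟩ := smooth_exists M hM0
  obtain ⟨r₀, hr₀16, hE⟩ := E_exists A
  set e := N + r₀ + 1 with he
  set j := q^e with hj
  have hje : e < j := Nat.lt_pow_self hq2
  have hj2 : r₀ + 2 ≤ j := by omega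
  have hjN : N < j := by omega
  set r := j - 2 with hr
  have hjr : j = r + 2 := by omega
  have htj1 : 1 ≤ t j := t_pos j
  set n := (t j).toNat with hn
  have hnt : (n:ℤ) = t j := Int.toNat_of_nonneg (by linarith)
  have hnN : N < n := by
    have h2j : (2:ℤ)^j ≤ t j := t_ge_pow j
    have hj2j : j < 2^j := Nat.lt_two_pow_self
    have hz1 : (j:ℤ) < (2:ℤ)^j := by exact_mod_cast hj2j
    have hz2 : (j:ℤ) < (n:ℤ) := by rw [hnt]; linarith
    have hz3 : j < n := by exact_mod_cast hz2
    omega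
  refine ⟨n, hnN, ?_⟩
  have heval : ∀ i : Fin k, t (m i * j) = (Polynomial.Chebyshev.T ℤ (m i : ℤ)).eval ((t j : ℤ)) := by
    intro i
    have hmul : ((m i * j : ℕ) : ℤ) = (m i : ℤ) * (j : ℤ) := by push_cast; ring
    rw [t, hmul, Polynomial.Chebyshev.T_mul, Polynomial.eval_comp]
    rfl
  have hgoal : ∏ i, (Polynomial.Chebyshev.T ℤ (m i : ℤ)).eval ((n : ℕ) : ℤ)
      = ∏ i, t (m i * j) :=
    Finset.prod_congr rfl fun i _ => by rw [hnt, ← heval i]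
  rw [hgoal]
  set B := 3^j with hB
  have hNi : ∀ i : Fin k, 0 < m i * j := fun i => Nat.mul_pos (hm i) (by omega)
  -- each cyclotomic norm factor divides B!
  have hdS : ∀ i : Fin k, ∀ d ∈ S (m i * j), ψn d ∣ B.factorial := by
    intro i d hd
    have hdmem := (Finset.mem_sdiff.1 hd).1
    have hd4 : d ∣ 4*(m i * j) := (Nat.mem_divisors.1 hdmem).1
    have hd0 : 0 < d := Nat.pos_of_mem_divisors hdmem
    have hdM : d ∣ 4*M*q^e := by
      refine hd4.trans ?_
      obtain ⟨c, hc⟩ := Finset.dvd_prod_of_mem m (Finset.mem_univ i)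
      exact ⟨c, by rw [← hj, hM, hc]; ring⟩
    have hsm : 2 * d.totient ≤ j := by
      have := hsmooth e (by omega) d hdM
      omega
    have hb : ψn d ≤ B := by
      calc ψn d ≤ 6 ^ d.totient := psin_le hd0
        _ ≤ 9 ^ d.totient := Nat.pow_le_pow_left (by norm_num) _
        _ = 3 ^ (2*d.totient) := by rw [pow_mul]; norm_num
        _ ≤ 3 ^ j := Nat.pow_le_pow_right (by norm_num) hsm
    have hpos : 0 < ψn d := Int.natAbs_pos.2 (psi_ne_zero (hNi i) hd)
    exact Nat.dvd_factorial hpos hb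
  have hprodi : ∀ i : Fin k,
      ((∏ d ∈ S (m i * j), ψn d : ℕ) : ℤ) = 4 * t (m i * j)^2 := by
    intro i
    rw [Nat.cast_prod]
    have h2 : ∀ d ∈ S (m i * j), ((ψn d : ℕ) : ℤ) = |ψ d| := fun d _ =>
      (Int.abs_eq_natAbs (ψ d)).symm
    rw [Finset.prod_congr rfl h2, ← Finset.abs_prod, psi_prod (hNi i),
      abs_of_nonneg (by positivity)]
  set P : ℕ := ∏ i : Fin k, ∏ d ∈ S (m i * j), ψn d with hP
  have hPdvd : (∏ i, t (m i * j)) ∣ (P : ℤ) := by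
    have hPc : (P:ℤ) = ∏ i : Fin k, ((∏ d ∈ S (m i * j), ψn d : ℕ) : ℤ) := by
      rw [hP]; push_cast; rfl
    rw [hPc]
    refine Finset.prod_dvd_prod_of_dvd _ _ fun i _ => ?_
    rw [hprodi i]
    exact ⟨4 * t (m i * j), by ring⟩
  have hPn : P ∣ n.factorial := by
    set c := ∑ i : Fin k, (S (m i * j)).card with hc
    have h1 : P ∣ (B.factorial)^c := by
      rw [hP, hc]
      calc ∏ i : Fin k, ∏ d ∈ S (m i * j), ψn d
          ∣ ∏ i : Fin k, (B.factorial)^(S (m i * j)).card :=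
            Finset.prod_dvd_prod_of_dvd _ _
              (fun i _ => prod_dvd_pow_fact _ _ _ (hdS i))
        _ = (B.factorial)^(∑ i : Fin k, (S (m i * j)).card) :=
            Finset.prod_pow_eq_pow_sum _ _ _
    have hcB : c * B ≤ n := by
      have hcard : ∀ i : Fin k, (S (m i * j)).card ≤ 4*(m i)*j := by
        intro i
        calc (S (m i * j)).card ≤ (4*(m i * j)).divisors.card :=
              Finset.card_le_card Finset.sdiff_subset
          _ ≤ 4*(m i * j) := card_divisors_le _
          _ = 4*(m i)*j := by ring
      have hc4 : c ≤ 4*A*j := by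
        have hsumeq : ∑ i : Fin k, 4*(m i)*j = 4*A*j := by
          rw [hA, Finset.mul_sum, Finset.sum_mul]
        calc c ≤ ∑ i : Fin k, 4*(m i)*j := Finset.sum_le_sum fun i _ => hcard i
          _ = 4*A*j := hsumeq
      have hp1 : (3:ℕ)^j * 3^r = 9 * 9^r := by
        rw [hjr, ← pow_add]
        have h2 : r + 2 + r = 2*(r+1) := by ring
        rw [h2, pow_mul]
        rw [show (3:ℕ)^2 = 9 by norm_num, pow_succ]
        ring
      have hnum : 4*A*j*B*3^r = 36*A*(r+2)*9^r := by
        calc 4*A*j*B*3^r = 4*A*j*(3^j*3^r) := by rw [hB]; ring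
          _ = 4*A*j*(9*9^r) := by rw [hp1]
          _ = 36*A*(r+2)*9^r := by rw [hjr]; ring
      have hEr : 36*A*(r+2)*9^r ≤ 7*11^r := hE r (by omega)
      have h11 : (7:ℤ)*11^r ≤ 3^r * t (r+2) := t_eleven r
      have h1Z : ((4*A*j*B : ℕ):ℤ) * 3^r ≤ t (r+2) * 3^r := by
        calc ((4*A*j*B : ℕ):ℤ) * 3^r = ((4*A*j*B*3^r : ℕ):ℤ) := by push_cast; ring
          _ = ((36*A*(r+2)*9^r : ℕ):ℤ) := by exact_mod_cast congrArg (fun x : ℕ => (x:ℤ)) hnum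
          _ ≤ ((7*11^r : ℕ):ℤ) := by exact_mod_cast hEr
          _ ≤ 3^r * t (r+2) := by push_cast; exact h11
          _ = t (r+2) * 3^r := by ring
      have h2Z : ((4*A*j*B : ℕ):ℤ) ≤ t j := by
        have hpow : (0:ℤ) < 3^r := by positivity
        have hle := le_of_mul_le_mul_right h1Z hpow
        have hteq : t (r+2) = t j := by rw [hjr]
        exact hle.trans (le_of_eq hteq)
      have h3Z : ((c*B : ℕ):ℤ) ≤ (n:ℤ) := by
        have hstep : c*B ≤ 4*A*j*B := Nat.mul_le_mul_right _ hc4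
        rw [hnt]
        calc ((c*B:ℕ):ℤ) ≤ ((4*A*j*B:ℕ):ℤ) := by exact_mod_cast hstep
          _ ≤ t j := h2Z
      exact_mod_cast h3Z
    exact h1.trans ((pow_fact_dvd c B).trans (Nat.factorial_dvd_factorial hcB))
  exact hPdvd.trans (Int.natCast_dvd_natCast.2 hPn)
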